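/- Let X ⊆ ℝ² be a compact convex set with nonempty interior (in particular, X is not a point or a line segment). Then lim_{r → 0⁺} ℓ(∂X_r) = ℓ(∂X), and likewise lim_{r → 0⁺} ℓ(∂((X_r)^r)) = ℓ(∂X). -/
import Mathlib


open MeasureTheory Metric Set Real Pointwise
open scoped ENNReal NNReal RealInnerProductSpace

noncomputable section

/-- The Euclidean plane. -/
abbrev Plane := EuclideanSpace ℝ (Fin 2)

/-- The unit vector in the plane making angle `θ` with the horizontal axis. -/
def needleDir (θ : ℝ) : Plane :=
  (EuclideanSpace.equiv (Fin 2) ℝ).symm ![Real.cos θ, Real.sin θ]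

/-- The set of directions `θ ∈ [0, 2π)` for which the needle of length `l`
originating at `x` has its other endpoint in `X`. -/
def needleAngles (X : Set Plane) (l : ℝ) (x : Plane) : Set ℝ :=
  {θ ∈ Set.Ico 0 (2 * π) | x + l • needleDir θ ∈ X}

/-- The pointwise probability `p_X(x, l)` that a random needle of length `l` at `x`
lies within `X`. -/
def pointwiseProb (X : Set Plane) (x : Plane) (l : ℝ) : ℝ :=
  (1 / (2 * π)) * (volume (needleAngles X l x)).toReal

/-- The Buffon probability `P_X(l)` that a random needle of length `l` originating at a
uniformly chosen point of `X` lies within `X`; taken to be `0` when `X` has zero area. -/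
def buffonProb (X : Set Plane) (l : ℝ) : ℝ :=
  if volume X = 0 then 0
  else (1 / (2 * π * (volume X).toReal)) *
    ∫ x in X, (volume (needleAngles X l x)).toReal

/-- The interior parallel `X_r`: the Minkowski difference of `X` with the closed ball
of radius `r`. -/
def innerParallel (X : Set Plane) (r : ℝ) : Set Plane :=
  {x : Plane | Metric.closedBall x r ⊆ X}

/-- The exterior parallel `X^r`: the Minkowski sum of `X` with the closed ball
of radius `r`. -/
def exterParallel (X : Set Plane) (r : ℝ) : Set Plane :=
  X + Metric.closedBall (0 : Plane) r

end

section AuxProj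

open Classical in
/-- Metric projection onto a set, defined via choice through the variational inequality. -/
noncomputable def projMap (K : Set Plane) (x : Plane) : Plane :=
  if h : ∃ v ∈ K, ∀ w ∈ K, ⟪x - v, w - v⟫ ≤ 0 then h.choose else x

lemma exists_proj {K : Set Plane} (hne : K.Nonempty) (hc : IsClosed K) (hconv : Convex ℝ K)
    (x : Plane) : ∃ v ∈ K, ∀ w ∈ K, ⟪x - v, w - v⟫ ≤ 0 := by
  obtain ⟨v, hv, hmin⟩ := exists_norm_eq_iInf_of_complete_convex hne hc.isComplete hconv x
  exact ⟨v, hv, (norm_eq_iInf_iff_real_inner_le_zero hconv hv).1 hmin⟩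

lemma proj_unique {K : Set Plane} {x v v' : Plane} (hv : v ∈ K) (hv' : v' ∈ K)
    (h1 : ∀ w ∈ K, ⟪x - v, w - v⟫ ≤ 0) (h2 : ∀ w ∈ K, ⟪x - v', w - v'⟫ ≤ 0) : v = v' := by
  have a := h1 v' hv'
  have b := h2 v hv
  have key : ⟪v' - v, v' - v⟫ = ⟪x - v, v' - v⟫ - ⟪x - v', v' - v⟫ := by
    rw [← inner_sub_left]
    congr 1
    abel
  have e2 : ⟪x - v', v' - v⟫ = -⟪x - v', v - v'⟫ := by
    rw [← inner_neg_right, neg_sub]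
  have : ⟪v' - v, v' - v⟫ ≤ 0 := by rw [key, e2]; linarith
  have h0 : v' - v = 0 := by
    have := real_inner_self_nonpos.1 this
    exact this
  have := sub_eq_zero.1 h0
  exact this.symm

lemma projMap_spec {K : Set Plane} (hne : K.Nonempty) (hc : IsClosed K) (hconv : Convex ℝ K)
    (x : Plane) : projMap K x ∈ K ∧ ∀ w ∈ K, ⟪x - projMap K x, w - projMap K x⟫ ≤ 0 := by
  have hex := exists_proj hne hc hconv x
  rw [projMap, dif_pos hex]
  exact ⟨hex.choose_spec.1, hex.choose_spec.2⟩

lemma projMap_eq {K : Set Plane} (hne : K.Nonempty) (hc : IsClosed K) (hconv : Convex ℝ K)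
    {x v : Plane} (hv : v ∈ K) (hVI : ∀ w ∈ K, ⟪x - v, w - v⟫ ≤ 0) : projMap K x = v := by
  obtain ⟨h1, h2⟩ := projMap_spec hne hc hconv x
  exact proj_unique h1 hv h2 hVI

lemma projMap_lip {K : Set Plane} (hne : K.Nonempty) (hc : IsClosed K) (hconv : Convex ℝ K) :
    LipschitzWith 1 (projMap K) := by
  apply LipschitzWith.of_dist_le_mul
  intro x y
  set p := projMap K x with hp'
  set q := projMap K y with hq'
  obtain ⟨hp, hpVI⟩ := projMap_spec hne hc hconv x
  obtain ⟨hq, hqVI⟩ := projMap_spec hne hc hconv y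
  have h1 := hpVI q hq
  have h2 := hqVI p hp
  have decomp : ⟪x - y, p - q⟫ = ⟪x - p, p - q⟫ + ⟪p - q, p - q⟫ + ⟪q - y, p - q⟫ := by
    rw [← inner_add_left, ← inner_add_left]
    congr 1
    abel
  have e1 : ⟪x - p, p - q⟫ = -⟪x - p, q - p⟫ := by rw [← inner_neg_right, neg_sub]
  have e2 : ⟪q - y, p - q⟫ = -⟪y - q, p - q⟫ := by rw [← inner_neg_left, neg_sub]
  have key : ⟪p - q, p - q⟫ ≤ ⟪x - y, p - q⟫ := by
    rw [decomp, e1, e2]; linarith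
  have hsq : ‖p - q‖ ^ 2 ≤ ‖x - y‖ * ‖p - q‖ :=
    calc ‖p - q‖ ^ 2 = ⟪p - q, p - q⟫ := (real_inner_self_eq_norm_sq _).symm
      _ ≤ ⟪x - y, p - q⟫ := key
      _ ≤ ‖x - y‖ * ‖p - q‖ := real_inner_le_norm _ _
  rw [NNReal.coe_one, one_mul, dist_eq_norm, dist_eq_norm]
  rcases eq_or_lt_of_le (norm_nonneg (p - q)) with h | h
  · rw [← h]; exact norm_nonneg _
  · nlinarith

lemma dist_projMap_le {K : Set Plane} (hne : K.Nonempty) (hc : IsClosed K) (hconv : Convex ℝ K)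
    {x y : Plane} (hy : y ∈ K) : ‖x - projMap K x‖ ≤ ‖x - y‖ := by
  obtain ⟨hp, hVI⟩ := projMap_spec hne hc hconv x
  set p := projMap K x
  have h := hVI y hy
  have hid : ‖(x - p) - (y - p)‖ ^ 2 = ‖x - p‖ ^ 2 - 2 * ⟪x - p, y - p⟫ + ‖y - p‖ ^ 2 :=
    norm_sub_sq_real _ _
  have hsub : (x - p) - (y - p) = x - y := by abel
  rw [hsub] at hid
  nlinarith [norm_nonneg (x - p), norm_nonneg (x - y), sq_nonneg ‖y - p‖]

lemma frontier_subset_image_projMap {K L : Set Plane} (hne : K.Nonempty) (hKc : IsCompact K)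
    (hconv : Convex ℝ K) (hLc : IsCompact L) (hKL : K ⊆ L) :
    frontier K ⊆ projMap K '' frontier L := by
  have hKcl : IsClosed K := hKc.isClosed
  have hLcl : IsClosed L := hLc.isClosed
  have hfLc : IsCompact (frontier L) :=
    hLc.of_isClosed_subset isClosed_frontier hLcl.frontier_subset
  have hlip := projMap_lip hne hKcl hconv
  have himcl : IsClosed (projMap K '' frontier L) := (hfLc.image hlip.continuous).isClosed
  intro y hy
  rw [← himcl.closure_eq]
  rw [Metric.mem_closure_iff]
  intro ε hε
  have hyK : y ∈ K := hKcl.frontier_subset hy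
  have hyc : y ∈ closure Kᶜ := by
    rw [frontier_eq_closure_inter_closure] at hy
    exact hy.2
  obtain ⟨w, hwK, hwy⟩ := Metric.mem_closure_iff.1 hyc (ε / 3) (by positivity)
  simp only [mem_compl_iff] at hwK
  set p := projMap K w with hpdef
  obtain ⟨hpK, hpVI⟩ := projMap_spec hne hKcl hconv w
  have hwp : w ≠ p := fun h => hwK (h ▸ hpK)
  have hdp : ‖w - p‖ ≤ ‖w - y‖ := dist_projMap_le hne hKcl hconv hyK
  set u := w - p with hudef
  have hu : u ≠ 0 := sub_ne_zero.2 hwp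
  have hun : 0 < ‖u‖ := norm_pos_iff.2 hu
  set S : Set ℝ := {t : ℝ | 0 ≤ t ∧ p + t • u ∈ L} with hSdef
  have hS0 : (0 : ℝ) ∈ S := ⟨le_refl 0, by simpa using hKL hpK⟩
  obtain ⟨R, hR⟩ := hLc.isBounded.exists_norm_le
  have hbdd : BddAbove S := by
    refine ⟨(R + ‖p‖) / ‖u‖, fun t ht => ?_⟩
    have h1 : ‖p + t • u‖ ≤ R := hR _ ht.2
    have h2 : ‖t • u‖ ≤ R + ‖p‖ := by
      have : t • u = (p + t • u) - p := by abel
      rw [this]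
      calc ‖(p + t • u) - p‖ ≤ ‖p + t • u‖ + ‖p‖ := norm_sub_le _ _
        _ ≤ R + ‖p‖ := by linarith
    rw [norm_smul, Real.norm_eq_abs, abs_of_nonneg ht.1] at h2
    rw [le_div_iff₀ hun]
    linarith
  have hScl : IsClosed S := by
    have hcont : Continuous fun t : ℝ => p + t • u :=
      continuous_const.add (continuous_id.smul continuous_const)
    have : S = Set.Ici (0 : ℝ) ∩ (fun t : ℝ => p + t • u) ⁻¹' L := by
      ext t; simp [hSdef, Set.mem_Ici, and_comm]
    rw [this]
    exact isClosed_Ici.inter (hLcl.preimage hcont)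
  set t₀ := sSup S with ht₀def
  have ht₀S : t₀ ∈ S := hScl.csSup_mem ⟨0, hS0⟩ hbdd
  set z := p + t₀ • u with hzdef
  have hzL : z ∈ L := ht₀S.2
  have hzfr : z ∈ frontier L := by
    rw [hLcl.frontier_eq]
    refine ⟨hzL, fun hzint => ?_⟩
    have hcont : Continuous fun t : ℝ => p + t • u :=
      continuous_const.add (continuous_id.smul continuous_const)
    have hopen : IsOpen ((fun t : ℝ => p + t • u) ⁻¹' interior L) :=
      isOpen_interior.preimage hcont
    obtain ⟨δ, hδ, hball⟩ := Metric.isOpen_iff.1 hopen t₀ hzint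
    have ht1 : t₀ + δ / 2 ∈ S := by
      refine ⟨by linarith [ht₀S.1], ?_⟩
      have : t₀ + δ / 2 ∈ Metric.ball t₀ δ := by
        rw [Metric.mem_ball, Real.dist_eq, show t₀ + δ / 2 - t₀ = δ / 2 by ring,
          abs_of_nonneg (by linarith)]
        linarith
      exact interior_subset (hball this)
    have := le_csSup hbdd ht1
    linarith
  have hVIz : ∀ k ∈ K, ⟪z - p, k - p⟫ ≤ 0 := by
    intro k hk
    have : z - p = t₀ • u := by rw [hzdef]; abel
    rw [this, real_inner_smul_left]
    exact mul_nonpos_of_nonneg_of_nonpos ht₀S.1 (hpVI k hk)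
  have hprojz : projMap K z = p := projMap_eq hne hKcl hconv hpK hVIz
  refine ⟨p, ⟨z, hzfr, hprojz⟩, ?_⟩
  have h1 : dist y w < ε / 3 := hwy
  have h2 : dist p y ≤ dist p w + dist w y := dist_triangle _ _ _
  have h3 : dist p w ≤ dist w y := by
    rw [dist_comm p w, dist_eq_norm, dist_eq_norm]
    exact hdp
  rw [dist_comm y p]
  rw [dist_comm w y] at h2 h3
  linarith

/-- Monotonicity of perimeter: a nonempty compact convex set contained in a compact set
has boundary length at most that of the bigger set. -/
lemma perim_mono {K L : Set Plane} (hne : K.Nonempty) (hKc : IsCompact K) (hconv : Convex ℝ K)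
    (hLc : IsCompact L) (hKL : K ⊆ L) : μH[1] (frontier K) ≤ μH[1] (frontier L) := by
  calc μH[1] (frontier K) ≤ μH[1] (projMap K '' frontier L) :=
        measure_mono (frontier_subset_image_projMap hne hKc hconv hLc hKL)
    _ ≤ ((1 : NNReal) : ℝ≥0∞) ^ (1 : ℝ) * μH[1] (frontier L) :=
        (projMap_lip hne hKc.isClosed hconv).hausdorffMeasure_image_le zero_le_one _
    _ = μH[1] (frontier L) := by simp

lemma frontier_vadd_set (v : Plane) (s : Set Plane) : frontier (v +ᵥ s) = v +ᵥ frontier s := by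
  have h := (Homeomorph.addLeft v).image_frontier s
  simp only [Homeomorph.coe_addLeft] at h
  rw [← Set.image_vadd, ← Set.image_vadd]
  simp only [vadd_eq_add]
  exact h.symm

lemma frontier_smul_set {c : ℝ} (hc : c ≠ 0) (s : Set Plane) :
    frontier (c • s) = c • frontier s := by
  have hinj : Function.Injective (fun x : Plane => c • x) := smul_right_injective Plane hc
  rw [frontier, frontier, closure_smul₀' hc, interior_smul₀ hc,
    ← Set.image_smul, ← Set.image_smul, ← Set.image_smul, ← Set.image_diff hinj]

lemma hm_vadd (v : Plane) (s : Set Plane) : μH[1] (v +ᵥ s) = μH[1] s := by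
  rw [← Set.image_vadd]
  exact (isometry_vadd Plane v).hausdorffMeasure_image (Or.inl zero_le_one) s

lemma hm_homothety {c : ℝ} (hc : c ≠ 0) (v : Plane) (s : Set Plane) :
    μH[1] (frontier (v +ᵥ c • s)) = (‖c‖₊ : ℝ≥0∞) * μH[1] (frontier s) := by
  rw [frontier_vadd_set, hm_vadd, frontier_smul_set hc,
    MeasureTheory.Measure.hausdorffMeasure_smul₀ zero_le_one hc]
  simp [ENNReal.smul_def]

end AuxProj

section AuxGeom

lemma mem_innerParallel_iff {X : Set Plane} {r : ℝ} {x : Plane} :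
    x ∈ innerParallel X r ↔ ∀ v ∈ Metric.closedBall (0 : Plane) r, x + v ∈ X := by
  constructor
  · intro h v hv
    apply h
    rw [Metric.mem_closedBall, dist_eq_norm, add_sub_cancel_left]
    exact mem_closedBall_zero_iff.1 hv
  · intro h y hy
    have : y = x + (y - x) := by abel
    rw [this]
    apply h
    rw [mem_closedBall_zero_iff, ← dist_eq_norm]
    exact hy

lemma innerParallel_subset {X : Set Plane} {r : ℝ} (hr : 0 ≤ r) : innerParallel X r ⊆ X :=
  fun _ hx => hx (Metric.mem_closedBall_self hr)

lemma isClosed_innerParallel {X : Set Plane} (hX : IsClosed X) (r : ℝ) :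
    IsClosed (innerParallel X r) := by
  have : innerParallel X r =
      ⋂ v ∈ Metric.closedBall (0 : Plane) r, (fun x => x + v) ⁻¹' X := by
    ext x
    simp [mem_innerParallel_iff]
  rw [this]
  exact isClosed_biInter fun v _ => hX.preimage (continuous_id.add continuous_const)

lemma convex_innerParallel {X : Set Plane} (hX : Convex ℝ X) (r : ℝ) :
    Convex ℝ (innerParallel X r) := by
  intro x hx y hy a b ha hb hab
  rw [mem_innerParallel_iff] at hx hy ⊢
  intro v hv
  have heq : a • x + b • y + v = a • (x + v) + b • (y + v) := by
    calc a • x + b • y + v = a • x + b • y + (a + b) • v := by rw [hab, one_smul]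
      _ = a • (x + v) + b • (y + v) := by rw [add_smul, smul_add, smul_add]; abel
  rw [heq]
  exact hX (hx v hv) (hy v hv) ha hb hab

lemma isCompact_innerParallel {X : Set Plane} (hXc : IsCompact X) {r : ℝ} (hr : 0 ≤ r) :
    IsCompact (innerParallel X r) :=
  hXc.of_isClosed_subset (isClosed_innerParallel hXc.isClosed r) (innerParallel_subset hr)

lemma exterParallel_innerParallel_subset {X : Set Plane} {r : ℝ} :
    exterParallel (innerParallel X r) r ⊆ X := by
  rintro z hz
  rw [exterParallel, Set.mem_add] at hz
  obtain ⟨x, hx, b, hb, rfl⟩ := hz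
  apply hx
  rw [Metric.mem_closedBall, dist_eq_norm, add_sub_cancel_left]
  exact mem_closedBall_zero_iff.1 hb

lemma subset_exterParallel_innerParallel {X : Set Plane} {r : ℝ} (hr : 0 ≤ r) :
    innerParallel X r ⊆ exterParallel (innerParallel X r) r := by
  intro x hx
  rw [exterParallel, Set.mem_add]
  exact ⟨x, hx, 0, by simpa using hr, add_zero x⟩

end AuxGeom

/-- the perimeters of the interior parallels `X_r` and of `(X_r)^r`
converge to the perimeter of `X` as `r → 0⁺`. -/
theorem perimeter_innerParallel_tendsto (X : Set Plane) (hXc : IsCompact X)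
    (hXconv : Convex ℝ X) (hint : (interior X).Nonempty) :
    Filter.Tendsto (fun r : ℝ => μH[1] (frontier (innerParallel X r)))
      (nhdsWithin 0 (Set.Ioi 0)) (nhds (μH[1] (frontier X))) ∧
    Filter.Tendsto (fun r : ℝ => μH[1] (frontier (exterParallel (innerParallel X r) r)))
      (nhdsWithin 0 (Set.Ioi 0)) (nhds (μH[1] (frontier X))) := by
  classical
  obtain ⟨x₀, hx₀⟩ := hint
  obtain ⟨ε, hε, hball⟩ := Metric.isOpen_iff.1 isOpen_interior x₀ hx₀
  set ρ := ε / 2 with hρdef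
  have hρ : 0 < ρ := by positivity
  have hρX : Metric.closedBall x₀ ρ ⊆ X := by
    intro y hy
    apply interior_subset
    apply hball
    rw [Metric.mem_ball]
    calc dist y x₀ ≤ ρ := hy
      _ < ε := by rw [hρdef]; linarith
  have hx₀X : x₀ ∈ X := hρX (Metric.mem_closedBall_self hρ.le)
  set C := μH[1] (frontier X) with hCdef
  -- the scaled copy A r ⊆ X_r for 0 < r < ρ
  have key : ∀ r : ℝ, r ∈ Set.Ioo 0 ρ →
      ((‖1 - r / ρ‖₊ : ℝ≥0∞) * C ≤ μH[1] (frontier (innerParallel X r)) ∧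
        μH[1] (frontier (innerParallel X r)) ≤ C) ∧
      ((‖1 - r / ρ‖₊ : ℝ≥0∞) * C ≤ μH[1] (frontier (exterParallel (innerParallel X r) r)) ∧
        μH[1] (frontier (exterParallel (innerParallel X r) r)) ≤ C) := by
    rintro r ⟨hr0, hrρ⟩
    set c := 1 - r / ρ with hcdef
    have hc0 : 0 < c := by
      rw [hcdef]
      have : r / ρ < 1 := (div_lt_one hρ).2 hrρ
      linarith
    have hcne : c ≠ 0 := hc0.ne'
    set A := (r / ρ) • x₀ +ᵥ c • X with hAdef
    have hAsub : A ⊆ innerParallel X r := by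
      rintro y hy
      rw [hAdef] at hy
      obtain ⟨z, hz, rfl⟩ := hy
      obtain ⟨x, hx, rfl⟩ := hz
      rw [mem_innerParallel_iff]
      intro v hv
      have hrρ0 : (0:ℝ) < r / ρ := by positivity
      have hmem : x₀ + (ρ / r) • v ∈ X := by
        apply hρX
        rw [Metric.mem_closedBall, dist_eq_norm, add_sub_cancel_left, norm_smul,
          Real.norm_eq_abs, abs_of_nonneg (by positivity)]
        have hvn : ‖v‖ ≤ r := mem_closedBall_zero_iff.1 hv
        calc ρ / r * ‖v‖ ≤ ρ / r * r := by
              apply mul_le_mul_of_nonneg_left hvn (by positivity)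
          _ = ρ := by field_simp
      have heq : ((r / ρ) • x₀ +ᵥ c • x) + v = c • x + (r / ρ) • (x₀ + (ρ / r) • v) := by
        simp only [vadd_eq_add]
        rw [smul_add, smul_smul, show r / ρ * (ρ / r) = 1 by field_simp, one_smul]
        abel
      rw [heq]
      have hsum : c + r / ρ = 1 := by rw [hcdef]; ring
      exact hXconv hx hmem hc0.le hrρ0.le hsum
    have hAcomp : IsCompact A := by
      rw [hAdef, ← Set.image_vadd]
      exact (hXc.smul c).image (continuous_const_vadd _)
    have hAconv : Convex ℝ A := by
      rw [hAdef, ← Set.image_vadd]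
      have h1 : Convex ℝ (c • X) := hXconv.smul c
      have : ((fun x => (r / ρ) • x₀ +ᵥ x) '' (c • X)) = (fun x => (r / ρ) • x₀ + x) '' (c • X) := rfl
      rw [this]
      exact h1.translate _
    have hAne : A.Nonempty := ⟨(r / ρ) • x₀ +ᵥ c • x₀, ⟨c • x₀, ⟨x₀, hx₀X, rfl⟩, rfl⟩⟩
    have hApm : μH[1] (frontier A) = (‖c‖₊ : ℝ≥0∞) * C := hm_homothety hcne _ X
    have hIPc : IsCompact (innerParallel X r) := isCompact_innerParallel hXc hr0.le
    have hIPconv : Convex ℝ (innerParallel X r) := convex_innerParallel hXconv r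
    have hIPne : (innerParallel X r).Nonempty := hAne.mono hAsub
    have hEc : IsCompact (exterParallel (innerParallel X r) r) :=
      hIPc.add (isCompact_closedBall 0 r)
    have hEconv : Convex ℝ (exterParallel (innerParallel X r) r) :=
      hIPconv.add (convex_closedBall 0 r)
    have hEne : (exterParallel (innerParallel X r) r).Nonempty :=
      hIPne.mono (subset_exterParallel_innerParallel hr0.le)
    have hlow1 : (‖c‖₊ : ℝ≥0∞) * C ≤ μH[1] (frontier (innerParallel X r)) := by
      rw [← hApm]
      exact perim_mono hAne hAcomp hAconv hIPc hAsub
    have hup1 : μH[1] (frontier (innerParallel X r)) ≤ C :=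
      perim_mono hIPne hIPc hIPconv hXc (innerParallel_subset hr0.le)
    have hlow2 : (‖c‖₊ : ℝ≥0∞) * C ≤ μH[1] (frontier (exterParallel (innerParallel X r) r)) := by
      rw [← hApm]
      exact perim_mono hAne hAcomp hAconv hEc
        (hAsub.trans (subset_exterParallel_innerParallel hr0.le))
    have hup2 : μH[1] (frontier (exterParallel (innerParallel X r) r)) ≤ C :=
      perim_mono hEne hEc hEconv hXc exterParallel_innerParallel_subset
    exact ⟨⟨hlow1, hup1⟩, ⟨hlow2, hup2⟩⟩
  -- the lower bound tends to C
  have hg : Filter.Tendsto (fun r : ℝ => (‖1 - r / ρ‖₊ : ℝ≥0∞) * C)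
      (nhdsWithin 0 (Set.Ioi 0)) (nhds C) := by
    have hcont : Continuous fun r : ℝ => ((‖1 - r / ρ‖₊ : ℝ≥0) : ℝ≥0∞) :=
      ENNReal.continuous_coe.comp (continuous_const.sub (continuous_id.div_const ρ)).nnnorm
    have h1 : Filter.Tendsto (fun r : ℝ => ((‖1 - r / ρ‖₊ : ℝ≥0) : ℝ≥0∞))
        (nhdsWithin 0 (Set.Ioi 0)) (nhds 1) := by
      have := (hcont.tendsto 0).mono_left (nhdsWithin_le_nhds (s := Set.Ioi (0:ℝ)))
      simpa using this
    have := ENNReal.Tendsto.mul_const (b := C) h1 (Or.inl one_ne_zero)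
    simpa using this
  have hmem : Set.Ioo (0 : ℝ) ρ ∈ nhdsWithin (0 : ℝ) (Set.Ioi 0) :=
    Ioo_mem_nhdsGT_of_mem ⟨le_refl 0, hρ⟩
  constructor
  · refine tendsto_of_tendsto_of_tendsto_of_le_of_le' hg tendsto_const_nhds ?_ ?_
    · exact Filter.eventually_of_mem hmem fun r hr => ((key r hr).1).1
    · exact Filter.eventually_of_mem hmem fun r hr => ((key r hr).1).2
  · refine tendsto_of_tendsto_of_tendsto_of_le_of_le' hg tendsto_const_nhds ?_ ?_
    · exact Filter.eventually_of_mem hmem fun r hr => ((key r hr).2).1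
    · exact Filter.eventually_of_mem hmem fun r hr => ((key r hr).2).2
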